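/- Let n ≥ 1 be a real number, s ≥ 0, and let H : [0, s] → ℝ be differentiable with H(0) > 0 and H'(τ) ≤ −H(τ)²/n for all τ ∈ [0, s]. Then H(s) ≤ n·H(0)/(H(0)·s + n). -/

import Mathlib

open Set

/-- **Riccati comparison for equidistant hypersurfaces** (from the proof of Lemma 6.2):
if `H` is differentiable on `[0, s]` with `H(0) > 0` and `H' ≤ −H²/n`, then
`H(s) ≤ nH(0)/(H(0)s + n)`. -/
theorem riccati_comparison (n : ℝ) (hn : 1 ≤ n) (s : ℝ) (hs : 0 ≤ s) (H H' : ℝ → ℝ)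
    (hderiv : ∀ τ ∈ Icc (0 : ℝ) s, HasDerivWithinAt H (H' τ) (Icc (0 : ℝ) s) τ)
    (h0 : 0 < H 0)
    (hineq : ∀ τ ∈ Icc (0 : ℝ) s, H' τ ≤ -(H τ) ^ 2 / n) :
    H s ≤ n * H 0 / (H 0 * s + n) := by
  have hn0 : (0 : ℝ) < n := lt_of_lt_of_le one_pos hn
  have hden : 0 < H 0 * s + n := by positivity
  have hmem0 : (0 : ℝ) ∈ Icc (0 : ℝ) s := ⟨le_rfl, hs⟩
  have hmems : s ∈ Icc (0 : ℝ) s := ⟨hs, le_rfl⟩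
  have hcont : ContinuousOn H (Icc 0 s) := fun τ hτ => (hderiv τ hτ).continuousWithinAt
  -- H is antitone on [0, s]
  have hH'le : ∀ τ ∈ Icc (0:ℝ) s, H' τ ≤ 0 := fun τ hτ =>
    (hineq τ hτ).trans (div_nonpos_of_nonpos_of_nonneg (neg_nonpos.2 (sq_nonneg _)) hn0.le)
  have hanti : AntitoneOn H (Icc 0 s) := by
    apply antitoneOn_of_hasDerivWithinAt_nonpos (convex_Icc 0 s) hcont
      (fun x hx => (hderiv x (interior_subset hx)).mono interior_subset)
      (fun x hx => hH'le x (interior_subset hx))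
  rcases le_or_gt (H s) 0 with hHs | hHs
  · exact hHs.trans (le_of_lt (by positivity))
  -- now H > 0 on all of [0, s]
  have hpos : ∀ τ ∈ Icc (0:ℝ) s, 0 < H τ := fun τ hτ =>
    lt_of_lt_of_le hHs (hanti hτ hmems hτ.2)
  -- F τ = 1/H τ - τ/n is monotone
  set F : ℝ → ℝ := fun τ => (H τ)⁻¹ - τ / n with hF
  have hmono : MonotoneOn F (Icc 0 s) := by
    apply monotoneOn_of_hasDerivWithinAt_nonneg (convex_Icc 0 s)
      (f' := fun τ => -H' τ / (H τ) ^ 2 - 1 / n)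
    · exact ContinuousOn.sub (hcont.inv₀ fun τ hτ => (hpos τ hτ).ne')
        (continuousOn_id.div_const n)
    · intro x hx
      have hx' := interior_subset hx
      have h1 : HasDerivWithinAt (fun τ => (H τ)⁻¹) (-H' x / (H x) ^ 2) (interior (Icc 0 s)) x :=
        ((hderiv x hx').mono interior_subset).inv (hpos x hx').ne'
      have h2 : HasDerivWithinAt (fun τ : ℝ => τ / n) (1 / n) (interior (Icc 0 s)) x := by
        simpa using (hasDerivWithinAt_id x _).div_const n
      exact h1.sub h2
    · intro x hx
      have hx' := interior_subset hx
      have hHx := hpos x hx'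
      have h1 : H x ^ 2 / n ≤ -H' x := by
        have := hineq x hx'
        have := neg_div n (H x ^ 2)
        linarith [this]
      have h2 : H x ^ 2 ≤ -H' x * n := (div_le_iff₀ hn0).1 h1
      rw [sub_nonneg, div_le_div_iff₀ hn0 (by positivity)]
      linarith
  have key : (H 0)⁻¹ - 0 / n ≤ (H s)⁻¹ - s / n := hmono hmem0 hmems hs
  have key' : (H 0)⁻¹ + s / n ≤ (H s)⁻¹ := by
    rw [zero_div] at key; linarith
  have hq : (H 0 * s + n) / (n * H 0) ≤ (H s)⁻¹ := by
    have : (H 0 * s + n) / (n * H 0) = (H 0)⁻¹ + s / n := by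
      field_simp; ring
    linarith [this ▸ key']
  have hqpos : 0 < (H 0 * s + n) / (n * H 0) := by positivity
  have : (H s) ≤ ((H 0 * s + n) / (n * H 0))⁻¹ := by
    rw [le_inv_comm₀ hHs hqpos] at *
    · exact hq
  calc H s ≤ ((H 0 * s + n) / (n * H 0))⁻¹ := this
    _ = n * H 0 / (H 0 * s + n) := by rw [inv_div]
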